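/- Let ε > 0 and 0 ≤ a < b ≤ 1 with h := b − a. For all x ∈ [a,b], |sinh(ε(x−a))/sinh(ε(b−a)) − (x−a)/(b−a)| ≤ (ε²h²)/3 · exp(εh) (and in particular the bound ε²h²/3 when εh ≤ 1 up to the factor e). -/

import Mathlib

open Real

lemma sinh_le_mul_exp {s : ℝ} (hs : 0 ≤ s) : Real.sinh s ≤ s * Real.exp s := by
  have h1 := Real.add_one_le_exp (-(2*s))
  have h2 := Real.exp_pos s
  have h3 : Real.exp (-(2*s)) = Real.exp (-s) * Real.exp (-s) := by
    rw [← Real.exp_add]; ring_nf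
  have h4 : Real.exp s * Real.exp (-s) = 1 := by
    rw [← Real.exp_add]; simp
  rw [Real.sinh_eq]
  nlinarith [Real.exp_pos (-s)]

lemma cosh_sub_one_le {t : ℝ} (ht : 0 ≤ t) :
    Real.cosh t - 1 ≤ t ^ 2 / 2 * Real.exp t := by
  have h1 : Real.cosh t = 2 * Real.sinh (t/2) ^ 2 + 1 := by
    have h2 : Real.cosh (2 * (t/2)) = Real.cosh (t/2) ^ 2 + Real.sinh (t/2) ^ 2 :=
      Real.cosh_two_mul _
    rw [show (2 : ℝ) * (t/2) = t from by ring] at h2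
    nlinarith [Real.cosh_sq (t/2)]
  have h2 : Real.sinh (t/2) ≤ (t/2) * Real.exp (t/2) := sinh_le_mul_exp (by linarith)
  have h3 : 0 ≤ Real.sinh (t/2) := Real.sinh_nonneg_iff.mpr (by linarith)
  have h4 : Real.exp (t/2) * Real.exp (t/2) = Real.exp t := by
    rw [← Real.exp_add]; ring_nf
  nlinarith [Real.exp_pos (t/2)]

lemma sinh_sub_self_le {t : ℝ} (ht : 0 ≤ t) :
    Real.sinh t - t ≤ t ^ 3 / 6 * Real.exp t := by
  set g : ℝ → ℝ := fun x => x ^ 3 / 6 * Real.exp x + x - Real.sinh x with hg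
  have hderiv : ∀ x : ℝ, HasDerivAt g
      (3 * x ^ 2 / 6 * Real.exp x + x ^ 3 / 6 * Real.exp x + 1 - Real.cosh x) x := by
    intro x
    have h1 : HasDerivAt (fun x : ℝ => x ^ 3 / 6) (3 * x ^ 2 / 6) x := by
      simpa using (hasDerivAt_pow 3 x).div_const 6
    have h2 := h1.mul (Real.hasDerivAt_exp x)
    have h3 := (h2.add (hasDerivAt_id x)).sub (Real.hasDerivAt_sinh x)
    exact h3
  have hmono : MonotoneOn g (Set.Ici (0:ℝ)) := by
    apply monotoneOn_of_deriv_nonneg (convex_Ici 0)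
    · exact Continuous.continuousOn (by fun_prop)
    · intro x hx
      exact (hderiv x).differentiableAt.differentiableWithinAt
    · intro x hx
      rw [(hderiv x).deriv]
      simp only [interior_Ici, Set.mem_Ioi] at hx
      have := cosh_sub_one_le (le_of_lt hx)
      nlinarith [Real.exp_pos x, mul_nonneg (pow_nonneg hx.le 3) (Real.exp_pos x).le]
  have h0 : g 0 ≤ g t := hmono Set.self_mem_Ici ht ht
  simp [hg, Real.sinh_zero] at h0
  linarith

lemma key_bound {t T : ℝ} (ht : 0 ≤ t) (htT : t ≤ T) (hT : 0 < T) :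
    |Real.sinh t / Real.sinh T - t / T| ≤ T ^ 2 / 3 * Real.exp T := by
  have hst : t ≤ Real.sinh t := Real.self_le_sinh_iff.mpr ht
  have hsT : T ≤ Real.sinh T := Real.self_le_sinh_iff.mpr hT.le
  have hsTpos : 0 < Real.sinh T := lt_of_lt_of_le hT hsT
  have hA : Real.sinh t - t ≤ t ^ 3 / 6 * Real.exp t := sinh_sub_self_le ht
  have hB : Real.sinh T - T ≤ T ^ 3 / 6 * Real.exp T := sinh_sub_self_le (le_trans ht htT)
  have hexp : Real.exp t ≤ Real.exp T := Real.exp_le_exp.mpr htT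
  have hexppos := Real.exp_pos T
  rw [div_sub_div _ _ hsTpos.ne' hT.ne', abs_div]
  have hnum : |Real.sinh t * T - Real.sinh T * t| ≤ T ^ 4 / 6 * Real.exp T := by
    have h5 : t ^ 3 * Real.exp t ≤ T ^ 3 * Real.exp T :=
      mul_le_mul (pow_le_pow_left₀ ht htT 3) hexp (Real.exp_pos t).le (by positivity)
    have h6 : (0:ℝ) ≤ T ^ 3 / 6 * Real.exp T := by positivity
    rw [abs_le]
    constructor
    · nlinarith [Real.exp_pos t, mul_nonneg hT.le (sub_nonneg.mpr hst),
        mul_le_mul_of_nonneg_left hB ht, mul_le_mul_of_nonneg_right htT h6]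
    · nlinarith [Real.exp_pos t, mul_nonneg ht (sub_nonneg.mpr hsT),
        mul_le_mul_of_nonneg_left hA hT.le, h5]
  have hden : T ^ 2 ≤ |Real.sinh T * T| := by
    rw [abs_of_pos (by positivity)]
    nlinarith
  calc |Real.sinh t * T - Real.sinh T * t| / |Real.sinh T * T|
      ≤ (T ^ 4 / 6 * Real.exp T) / T ^ 2 :=
        div_le_div₀ (by positivity) hnum (by positivity) hden
    _ ≤ T ^ 2 / 3 * Real.exp T := by
        rw [div_le_iff₀ (by positivity : (0:ℝ) < T ^ 2)]
        nlinarith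

theorem cardinal_vs_tent (ε a b : ℝ) (hε : 0 < ε) (ha : 0 ≤ a) (hab : a < b)
    (hb : b ≤ 1) :
    ∀ x ∈ Set.Icc a b,
      |Real.sinh (ε * (x - a)) / Real.sinh (ε * (b - a)) - (x - a) / (b - a)| ≤
        ε ^ 2 * (b - a) ^ 2 / 3 * Real.exp (ε * (b - a)) := by
  intro x hx
  obtain ⟨hxa, hxb⟩ := hx
  have hT : 0 < ε * (b - a) := by nlinarith
  have ht : 0 ≤ ε * (x - a) := by nlinarith
  have htT : ε * (x - a) ≤ ε * (b - a) := by nlinarith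
  have hdivs : (x - a) / (b - a) = (ε * (x - a)) / (ε * (b - a)) := by
    rw [mul_div_mul_left _ _ hε.ne']
  have hrhs : ε ^ 2 * (b - a) ^ 2 / 3 = (ε * (b - a)) ^ 2 / 3 := by ring
  rw [hdivs, hrhs]
  exact key_bound ht htT hT
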